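/- arXiv:1904.10525 — 2 statements merged into one kernel-verified Lean document; each statement's English description precedes it below -/
import Mathlib

section
/- Let A₀ be an n×n real matrix and P₀ a symmetric positive definite matrix satisfying the Lyapunov equation P₀A₀ + A₀ᵀP₀ = −I. Then for all t ≥ 0, Tr(e^{A₀ᵀt} e^{A₀t}) ≤ n·(λ̄(P₀)/λ̲(P₀))·e^{−t/λ̄(P₀)}, where λ̲(P₀) and λ̄(P₀) are the smallest and largest eigenvalues of P₀. -/
open Matrix

attribute [local instance] Matrix.frobeniusNormedAddCommGroup Matrix.frobeniusNormedSpace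
  Matrix.frobeniusNormedRing Matrix.frobeniusNormedAlgebra

lemma quad_spec {n : ℕ} (P : Matrix (Fin n) (Fin n) ℝ) (hP : P.PosDef)
    (x : Fin n → ℝ) :
    x ⬝ᵥ (P *ᵥ x) = ∑ i, hP.1.eigenvalues i * (hP.1.eigenvectorBasis.repr (WithLp.toLp 2 x) i)^2 ∧
    x ⬝ᵥ x = ∑ i, (hP.1.eigenvectorBasis.repr (WithLp.toLp 2 x) i)^2 := by
  set b := hP.1.eigenvectorBasis with hb
  have hdot : ∀ i, x ⬝ᵥ ⇑(b i) = b.repr (WithLp.toLp 2 x) i := by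
    intro i
    rw [OrthonormalBasis.repr_apply_apply]
    simp [PiLp.inner_apply, dotProduct, mul_comm]
  have hx : (∑ i, b.repr (WithLp.toLp 2 x) i • (b i : EuclideanSpace ℝ (Fin n))) = x := by rw [b.sum_repr]
  have key : ∀ (c : Fin n → ℝ), x ⬝ᵥ (∑ i, c i • (b i : Fin n → ℝ)) = ∑ i, c i * b.repr (WithLp.toLp 2 x) i := by
    intro c
    have h1 : x ⬝ᵥ (∑ i, c i • (b i : Fin n → ℝ)) = ∑ i, x ⬝ᵥ (c i • (b i : Fin n → ℝ)) := by
      simp only [dotProduct, Finset.sum_apply, Finset.mul_sum, Pi.smul_apply]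
      exact Finset.sum_comm
    rw [h1]
    refine Finset.sum_congr rfl fun i _ => ?_
    rw [dotProduct_smul, smul_eq_mul]
    exact congrArg (fun z => c i * z) (hdot i)
  constructor
  · have hPx : P *ᵥ x = ∑ i, (b.repr (WithLp.toLp 2 x) i * hP.1.eigenvalues i) • (b i : Fin n → ℝ) := by
      conv_lhs => rw [← hx]
      rw [show (∑ i, b.repr (WithLp.toLp 2 x) i • (b i : EuclideanSpace ℝ (Fin n))) = (∑ i, b.repr (WithLp.toLp 2 x) i • ((b i : Fin n → ℝ))) from by simp [WithLp.ofLp_sum]]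
      rw [← Matrix.mulVecLin_apply, map_sum]
      refine Finset.sum_congr rfl fun i _ => ?_
      rw [Matrix.mulVecLin_apply, Matrix.mulVec_smul, mul_smul]
      exact congrArg (fun z => b.repr (WithLp.toLp 2 x) i • z) (hP.1.mulVec_eigenvectorBasis i)
    rw [hPx, key]
    refine Finset.sum_congr rfl fun i _ => ?_
    ring
  · conv_lhs => rw [show x ⬝ᵥ x = x ⬝ᵥ (∑ i, b.repr (WithLp.toLp 2 x) i • ((b i : Fin n → ℝ))) from by rw [show (∑ i, b.repr (WithLp.toLp 2 x) i • ((b i : Fin n → ℝ))) = x from by simpa [WithLp.ofLp_sum] using hx]]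
    rw [key]
    refine Finset.sum_congr rfl fun i _ => ?_
    ring

lemma quad_bounds {n : ℕ} (P : Matrix (Fin n) (Fin n) ℝ) (hP : P.PosDef)
    (x : Fin n → ℝ) :
    (⨅ i, hP.1.eigenvalues i) * (x ⬝ᵥ x) ≤ x ⬝ᵥ (P *ᵥ x) ∧
      x ⬝ᵥ (P *ᵥ x) ≤ (⨆ i, hP.1.eigenvalues i) * (x ⬝ᵥ x) := by
  obtain ⟨h1, h2⟩ := quad_spec P hP x
  rw [h1, h2, Finset.mul_sum, Finset.mul_sum]
  constructor
  · refine Finset.sum_le_sum fun i _ => ?_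
    exact mul_le_mul_of_nonneg_right
      (ciInf_le (Set.Finite.bddBelow (Set.finite_range _)) i) (sq_nonneg _)
  · refine Finset.sum_le_sum fun i _ => ?_
    exact mul_le_mul_of_nonneg_right
      (le_ciSup (Set.Finite.bddAbove (Set.finite_range _)) i) (sq_nonneg _)

/-- derivative of the quadratic form along a differentiable curve -/
lemma hasDerivAt_quad {n : ℕ} (P : Matrix (Fin n) (Fin n) ℝ) {xf : ℝ → Fin n → ℝ}
    {xd : Fin n → ℝ} {t : ℝ} (hx : HasDerivAt xf xd t) :
    HasDerivAt (fun s => xf s ⬝ᵥ (P *ᵥ xf s))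
      (xd ⬝ᵥ (P *ᵥ xf t) + xf t ⬝ᵥ (P *ᵥ xd)) t := by
  have hci : ∀ i, HasDerivAt (fun s => xf s i) (xd i) t := fun i => hasDerivAt_pi.1 hx i
  have h : HasDerivAt (fun s => ∑ i, ∑ j, xf s i * (P i j * xf s j))
      (∑ i, ∑ j, (xd i * (P i j * xf t j) + xf t i * (P i j * xd j))) t := by
    refine HasDerivAt.fun_sum fun i _ => ?_
    refine HasDerivAt.fun_sum fun j _ => ?_
    exact (hci i).mul ((hci j).const_mul (P i j))
  have e1 : (fun s => ∑ i, ∑ j, xf s i * (P i j * xf s j)) = fun s => xf s ⬝ᵥ (P *ᵥ xf s) := by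
    funext s
    simp [dotProduct, Matrix.mulVec, Finset.mul_sum]
  have e2 : (∑ i, ∑ j, (xd i * (P i j * xf t j) + xf t i * (P i j * xd j)))
      = xd ⬝ᵥ (P *ᵥ xf t) + xf t ⬝ᵥ (P *ᵥ xd) := by
    simp [dotProduct, Matrix.mulVec, Finset.mul_sum, Finset.sum_add_distrib]
  rw [e1, e2] at h
  exact h

lemma hasDerivAt_expCurve {n : ℕ} (A : Matrix (Fin n) (Fin n) ℝ) (v : Fin n → ℝ) (t : ℝ) :
    HasDerivAt (fun s => NormedSpace.exp (s • A) *ᵥ v)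
      (A *ᵥ (NormedSpace.exp (t • A) *ᵥ v)) t := by
  let L : Matrix (Fin n) (Fin n) ℝ →ₗ[ℝ] (Fin n → ℝ) :=
    { toFun := fun M => M *ᵥ v
      map_add' := fun M N => Matrix.add_mulVec M N v
      map_smul' := fun c M => Matrix.smul_mulVec c M v }
  have hexp : HasDerivAt (fun s : ℝ => NormedSpace.exp (s • A))
      (A * NormedSpace.exp (t • A)) t := hasDerivAt_exp_smul_const' A t
  have := (L.toContinuousLinearMap.hasFDerivAt).comp_hasDerivAt t hexp
  exact (show HasDerivAt (fun s => NormedSpace.exp (s • A) *ᵥ v) ((A * NormedSpace.exp (t • A)) *ᵥ v) t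
    from this).congr_deriv (by rw [Matrix.mulVec_mulVec])

theorem stmt_3 (n : ℕ) (hn : 0 < n) (A₀ P₀ : Matrix (Fin n) (Fin n) ℝ)
    (hP : P₀.PosDef) (hlyap : P₀ * A₀ + A₀ᵀ * P₀ = -1) :
    ∀ t : ℝ, 0 ≤ t →
      (NormedSpace.exp (t • A₀ᵀ) * NormedSpace.exp (t • A₀)).trace ≤
        (n : ℝ) * ((⨆ i, hP.1.eigenvalues i) / (⨅ i, hP.1.eigenvalues i)) *
          Real.exp (-t / (⨆ i, hP.1.eigenvalues i)) := by
  intro t ht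
  haveI : Nonempty (Fin n) := ⟨⟨0, hn⟩⟩
  set m := ⨅ i, hP.1.eigenvalues i with hm_def
  set M := ⨆ i, hP.1.eigenvalues i with hM_def
  have hbddA : BddAbove (Set.range hP.1.eigenvalues) := Set.Finite.bddAbove (Set.finite_range _)
  have hbddB : BddBelow (Set.range hP.1.eigenvalues) := Set.Finite.bddBelow (Set.finite_range _)
  have hMpos : 0 < M :=
    lt_of_lt_of_le (hP.eigenvalues_pos (Classical.arbitrary (Fin n)))
      (le_ciSup hbddA _)
  have hmpos : 0 < m := by
    obtain ⟨i1, hi1⟩ := Finite.exists_min hP.1.eigenvalues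
    have : m = hP.1.eigenvalues i1 := le_antisymm (ciInf_le hbddB i1) (le_ciInf hi1)
    rw [this]; exact hP.eigenvalues_pos i1
  -- the quadratic identity along the flow
  have hquadid : ∀ x : Fin n → ℝ,
      (A₀ *ᵥ x) ⬝ᵥ (P₀ *ᵥ x) + x ⬝ᵥ (P₀ *ᵥ (A₀ *ᵥ x)) = -(x ⬝ᵥ x) := by
    intro x
    have h1 : (A₀ *ᵥ x) ⬝ᵥ (P₀ *ᵥ x) = x ⬝ᵥ ((A₀ᵀ * P₀) *ᵥ x) := by
      rw [← Matrix.mulVec_mulVec, dotProduct_mulVec x, Matrix.vecMul_transpose]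
    have h2 : x ⬝ᵥ (P₀ *ᵥ (A₀ *ᵥ x)) = x ⬝ᵥ ((P₀ * A₀) *ᵥ x) := by
      rw [Matrix.mulVec_mulVec]
    rw [h1, h2, ← dotProduct_add, ← Matrix.add_mulVec, add_comm (A₀ᵀ * P₀), hlyap,
      Matrix.neg_mulVec, Matrix.one_mulVec, dotProduct_neg]
  -- per-column bound
  have col : ∀ i : Fin n,
      (NormedSpace.exp (t • A₀) *ᵥ Pi.single i 1) ⬝ᵥ (NormedSpace.exp (t • A₀) *ᵥ Pi.single i 1)
        ≤ M / m * Real.exp (-t / M) := by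
    intro i
    set v : Fin n → ℝ := Pi.single i 1 with hv
    set x : ℝ → Fin n → ℝ := fun s => NormedSpace.exp (s • A₀) *ᵥ v with hx
    set g : ℝ → ℝ := fun s => x s ⬝ᵥ (P₀ *ᵥ x s) with hg
    have hgderiv : ∀ s, HasDerivAt g (-(x s ⬝ᵥ x s)) s := by
      intro s
      have h := hasDerivAt_quad P₀ (hasDerivAt_expCurve A₀ v s)
      rw [hquadid (x s)] at h
      exact h
    set h : ℝ → ℝ := fun s => g s * Real.exp (s / M) with hh_def
    have hhderiv : ∀ s, HasDerivAt h
        (-(x s ⬝ᵥ x s) * Real.exp (s / M) + g s * (Real.exp (s / M) * (1 / M))) s := by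
      intro s
      have he : HasDerivAt (fun s : ℝ => Real.exp (s / M)) (Real.exp (s / M) * (1 / M)) s := by
        have := ((hasDerivAt_id s).div_const M).exp
        simpa using this
      exact (hgderiv s).mul he
    have hanti : Antitone h := by
      refine antitone_of_deriv_nonpos (fun s => (hhderiv s).differentiableAt) fun s => ?_
      rw [(hhderiv s).deriv]
      have hub : g s ≤ M * (x s ⬝ᵥ x s) := (quad_bounds P₀ hP (x s)).2
      have hE := Real.exp_pos (s / M)
      have : g s * (1 / M) ≤ x s ⬝ᵥ x s := by
        rw [div_eq_mul_inv, one_mul]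
        rw [mul_comm M] at hub
        calc g s * M⁻¹ ≤ (x s ⬝ᵥ x s * M) * M⁻¹ := by
              exact mul_le_mul_of_nonneg_right hub (by positivity)
          _ = x s ⬝ᵥ x s := by field_simp
      nlinarith
    have hht : h t ≤ h 0 := hanti ht
    have hx0 : x 0 = v := by
      simp only [hx, zero_smul, NormedSpace.exp_zero, Matrix.one_mulVec]
    have hvv : v ⬝ᵥ v = (1 : ℝ) := by
      simp [hv, dotProduct, Pi.single_apply]
    have hg0 : g 0 ≤ M := by
      have := (quad_bounds P₀ hP (x 0)).2
      rw [hx0, hvv, mul_one] at this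
      rw [hg]; simpa [hx0] using this
    have hh0 : h 0 = g 0 := by simp [hh_def]
    have hgt : g t ≤ M * Real.exp (-t / M) := by
      have hE := Real.exp_pos (t / M)
      have h1 : g t * Real.exp (t / M) ≤ M := by
        rw [hh0] at hht; exact le_trans hht hg0
      rw [neg_div, Real.exp_neg, ← div_eq_mul_inv, le_div_iff₀ hE]
      exact h1
    have hlb : m * (x t ⬝ᵥ x t) ≤ g t := (quad_bounds P₀ hP (x t)).1
    have : x t ⬝ᵥ x t ≤ g t / m := by
      rw [le_div_iff₀ hmpos, mul_comm]; exact hlb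
    calc x t ⬝ᵥ x t ≤ g t / m := this
      _ ≤ (M * Real.exp (-t / M)) / m := by gcongr
      _ = M / m * Real.exp (-t / M) := by ring
  -- trace identity
  have htr : (NormedSpace.exp (t • A₀ᵀ) * NormedSpace.exp (t • A₀)).trace
      = ∑ i, (NormedSpace.exp (t • A₀) *ᵥ Pi.single i 1) ⬝ᵥ
          (NormedSpace.exp (t • A₀) *ᵥ Pi.single i 1) := by
    rw [show (t • A₀ᵀ) = (t • A₀)ᵀ from (Matrix.transpose_smul t A₀).symm,
      Matrix.exp_transpose]
    simp only [Matrix.trace, Matrix.diag, Matrix.mul_apply, Matrix.transpose_apply,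
      Matrix.mulVec_single_one, Matrix.col_apply, dotProduct, mul_one]
  rw [htr]
  calc (∑ i, (NormedSpace.exp (t • A₀) *ᵥ Pi.single i 1) ⬝ᵥ
          (NormedSpace.exp (t • A₀) *ᵥ Pi.single i 1))
      ≤ ∑ _i : Fin n, M / m * Real.exp (-t / M) := Finset.sum_le_sum fun i _ => col i
    _ = (n : ℝ) * (M / m) * Real.exp (-t / M) := by
        rw [Finset.sum_const, Finset.card_univ, Fintype.card_fin, nsmul_eq_mul, mul_assoc]
end

section
/- Let A₀ be an n×n real matrix and P₀ symmetric positive definite with P₀A₀ + A₀ᵀP₀ = −I. Then ‖e^{A₀t}‖ ≤ k·e^{−λt} for all t ≥ 0, where k = √(n·λ̄(P₀)/λ̲(P₀)), λ = 1/(2λ̄(P₀)), and ‖·‖ is the operator (spectral) norm. -/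
open Matrix

open scoped RealInnerProductSpace

attribute [local instance] Matrix.frobeniusNormedAddCommGroup Matrix.frobeniusNormedSpace
  Matrix.frobeniusNormedRing Matrix.frobeniusNormedAlgebra

/-- The spectral (operator 2-) norm of a real matrix. -/
noncomputable def spec {m n : ℕ} (M : Matrix (Fin m) (Fin n) ℝ) : ℝ :=
  ‖LinearMap.toContinuousLinearMap (Matrix.toEuclideanLin M)‖

set_option maxHeartbeats 1000000 in
set_option synthInstance.maxHeartbeats 200000 in
theorem stmt_4 (n : ℕ) (hn : 0 < n) (A₀ P₀ : Matrix (Fin n) (Fin n) ℝ)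
    (hP : P₀.PosDef) (hlyap : P₀ * A₀ + A₀ᵀ * P₀ = -1) :
    ∀ t : ℝ, 0 ≤ t →
      spec (NormedSpace.exp (t • A₀)) ≤
        Real.sqrt ((n : ℝ) * (⨆ i, hP.1.eigenvalues i) / (⨅ i, hP.1.eigenvalues i)) *
          Real.exp (-(1 / (2 * ⨆ i, hP.1.eigenvalues i)) * t) := by
  intro t ht
  haveI : Nonempty (Fin n) := ⟨⟨0, hn⟩⟩
  set T := Matrix.toEuclideanCLM (𝕜 := ℝ) (n := Fin n) with hTdef
  set Ac := T A₀ with hAcdef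
  set Pc := T P₀ with hPcdef
  set b := hP.1.eigenvectorBasis with hbdef
  set ev := hP.1.eigenvalues with hevdef
  set lM := ⨆ i, ev i with hlMdef
  set lm := ⨅ i, ev i with hlmdef
  -- basic facts about eigenvalues
  have evpos : ∀ i, 0 < ev i := fun i => hP.eigenvalues_pos i
  have hlMq : ∀ i, ev i ≤ lM := fun i =>
    le_ciSup (Set.finite_range ev).bddAbove i
  have hlmq : ∀ i, lm ≤ ev i := fun i =>
    ciInf_le (Set.finite_range ev).bddBelow i
  have hlM : 0 < lM := lt_of_lt_of_le (evpos ⟨0, hn⟩) (hlMq ⟨0, hn⟩)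
  have hlm : 0 < lm := by
    obtain ⟨i, hi⟩ := exists_eq_ciInf_of_finite (f := ev)
    rw [hlmdef, ← hi]; exact evpos i
  -- identification of spec with the CLM picture
  have hTcoe : ∀ M : Matrix (Fin n) (Fin n) ℝ,
      T M = LinearMap.toContinuousLinearMap (Matrix.toEuclideanLin M) := by
    intro M
    refine ContinuousLinearMap.coe_injective ?_
    rw [Matrix.coe_toEuclideanCLM_eq_toEuclideanLin]
    rfl
  have hTcont : Continuous T := by
    let L : Matrix (Fin n) (Fin n) ℝ →ₗ[ℝ]
        (EuclideanSpace ℝ (Fin n) →L[ℝ] EuclideanSpace ℝ (Fin n)) :=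
      { toFun := ⇑T, map_add' := map_add T, map_smul' := fun c x => map_smul T c x }
    exact L.continuous_of_finiteDimensional
  have hmapexp : T (NormedSpace.exp (t • A₀)) = NormedSpace.exp (t • Ac) := by
    have := NormedSpace.map_exp T hTcont (t • A₀)
    erw [this, _root_.map_smul]
  -- the Lyapunov identity in CLM form
  have hstar : A₀ᵀ = star A₀ := by
    rw [Matrix.star_eq_conjTranspose]
    ext i j
    simp [Matrix.conjTranspose_apply]
  have hlyapC : Pc * Ac + ContinuousLinearMap.adjoint Ac * Pc = -1 := by
    have h := congrArg T hlyap
    rw [map_add, _root_.map_mul, _root_.map_mul, map_neg, _root_.map_one, hstar,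
      map_star] at h
    rw [← ContinuousLinearMap.star_eq_adjoint]
    exact h
  -- eigenvector action
  have hPb : ∀ i, Pc (b i) = ev i • b i := by
    intro i
    have h := hP.1.mulVec_eigenvectorBasis i
    ext j
    have := congrFun h j
    simpa [hPcdef, hTdef, Matrix.ofLp_toEuclideanCLM] using this
  -- quadratic form bounds
  have key : ∀ x : EuclideanSpace ℝ (Fin n),
      ⟪x, Pc x⟫ = ∑ i, ev i * (b.repr x i)^2 ∧ ‖x‖^2 = ∑ i, (b.repr x i)^2 := by
    intro x
    constructor
    · have hx : x = ∑ i, b.repr x i • b i := (b.sum_repr x).symm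
      have hPx : Pc x = ∑ i, (ev i * b.repr x i) • b i := by
        conv_lhs => rw [hx]
        rw [map_sum]
        refine Finset.sum_congr rfl fun i _ => ?_
        rw [_root_.map_smul, hPb i, smul_smul, mul_comm]
      rw [hPx, inner_sum]
      refine Finset.sum_congr rfl fun i _ => ?_
      have hrepr : (inner ℝ x (b i) : ℝ) = b.repr x i := by
        rw [real_inner_comm]; exact (b.repr_apply_apply x i).symm
      rw [real_inner_smul_right, hrepr]
      ring
    · have h1 : ‖x‖ = ‖b.repr x‖ := (b.repr.norm_map x).symm
      rw [h1, EuclideanSpace.norm_eq, Real.sq_sqrt (by positivity)]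
      simp [sq_abs]
  have keyU : ∀ x : EuclideanSpace ℝ (Fin n), ⟪x, Pc x⟫ ≤ lM * ‖x‖^2 := by
    intro x
    rw [(key x).1, (key x).2, Finset.mul_sum]
    refine Finset.sum_le_sum fun i _ => ?_
    exact mul_le_mul_of_nonneg_right (hlMq i) (sq_nonneg _)
  have keyL : ∀ x : EuclideanSpace ℝ (Fin n), lm * ‖x‖^2 ≤ ⟪x, Pc x⟫ := by
    intro x
    rw [(key x).1, (key x).2, Finset.mul_sum]
    refine Finset.sum_le_sum fun i _ => ?_
    exact mul_le_mul_of_nonneg_right (hlmq i) (sq_nonneg _)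
  -- the constant
  set c := lM⁻¹ with hcdef
  have hc : 0 < c := inv_pos.mpr hlM
  set K := Real.sqrt (lM / lm) * Real.exp (-(1 / (2 * lM)) * t) with hKdef
  have hKnonneg : 0 ≤ K :=
    mul_nonneg (Real.sqrt_nonneg _) (Real.exp_nonneg _)
  -- the main pointwise estimate
  have main : ∀ x₀ : EuclideanSpace ℝ (Fin n),
      ‖(NormedSpace.exp (t • Ac)) x₀‖ ≤ K * ‖x₀‖ := by
    intro x₀
    set f : ℝ → EuclideanSpace ℝ (Fin n) := fun s => (NormedSpace.exp (s • Ac)) x₀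
      with hfdef
    have hfd : ∀ s : ℝ, HasDerivAt f (Ac (f s)) s := by
      intro s
      have h1 := hasDerivAt_exp_smul_const' (𝕂 := ℝ) Ac s
      have h2 := ((ContinuousLinearMap.apply ℝ (EuclideanSpace ℝ (Fin n))
        x₀).hasFDerivAt).comp_hasDerivAt s h1
      exact h2
    set V : ℝ → ℝ := fun s => ⟪f s, Pc (f s)⟫ with hVdef
    have hVd : ∀ s : ℝ, HasDerivAt V (-‖f s‖^2) s := by
      intro s
      have hPf : HasDerivAt (fun u => Pc (f u)) (Pc (Ac (f s))) s :=
        (Pc.hasFDerivAt).comp_hasDerivAt s (hfd s)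
      have h3 := (hfd s).inner ℝ hPf
      have h4 : (⟪f s, Pc (Ac (f s))⟫ + ⟪Ac (f s), Pc (f s)⟫ : ℝ) = -‖f s‖^2 := by
        have h5 : (⟪Ac (f s), Pc (f s)⟫ : ℝ)
            = ⟪f s, (ContinuousLinearMap.adjoint Ac) (Pc (f s))⟫ :=
          (ContinuousLinearMap.adjoint_inner_right Ac (f s) (Pc (f s))).symm
        rw [h5, ← inner_add_right]
        have h6 : Pc (Ac (f s)) + (ContinuousLinearMap.adjoint Ac) (Pc (f s))
            = (Pc * Ac + ContinuousLinearMap.adjoint Ac * Pc) (f s) := by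
          simp [ContinuousLinearMap.mul_apply]
        rw [h6, hlyapC]
        have h7 : ((-1 : EuclideanSpace ℝ (Fin n) →L[ℝ] EuclideanSpace ℝ (Fin n))
            (f s)) = -(f s) := rfl
        rw [h7, inner_neg_right, real_inner_self_eq_norm_sq]
      rw [← h4]
      exact h3
    -- Gronwall-type argument
    set g : ℝ → ℝ := fun s => V s * Real.exp (c * s) with hgdef
    have hgd : ∀ s : ℝ,
        HasDerivAt g ((-‖f s‖^2 + c * V s) * Real.exp (c * s)) s := by
      intro s
      have he : HasDerivAt (fun u : ℝ => Real.exp (c * u)) (Real.exp (c * s) * c) s := by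
        simpa using ((hasDerivAt_id s).const_mul c).exp
      have := (hVd s).mul he
      exact this.congr_deriv (by ring)
    have hgderiv_nonpos : ∀ s : ℝ, (-‖f s‖^2 + c * V s) * Real.exp (c * s) ≤ 0 := by
      intro s
      have h1 : c * V s ≤ ‖f s‖^2 := by
        have h2 := keyU (f s)
        have h3 : c * V s ≤ c * (lM * ‖f s‖^2) :=
          mul_le_mul_of_nonneg_left h2 hc.le
        rw [← mul_assoc, inv_mul_cancel₀ (ne_of_gt hlM), one_mul] at h3
        exact h3
      nlinarith [Real.exp_pos (c * s)]
    have hant : AntitoneOn g (Set.Ici (0 : ℝ)) := by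
      apply antitoneOn_of_deriv_nonpos (convex_Ici 0)
      · exact fun s _ => (hgd s).differentiableAt.continuousAt.continuousWithinAt
      · exact fun s _ => (hgd s).differentiableAt.differentiableWithinAt
      · intro s _
        rw [(hgd s).deriv]
        exact hgderiv_nonpos s
    have hf0 : f 0 = x₀ := by
      show (NormedSpace.exp ((0:ℝ) • Ac)) x₀ = x₀
      have hz : (0:ℝ) • Ac = 0 := zero_smul ℝ Ac
      rw [hz, NormedSpace.exp_zero, ContinuousLinearMap.one_apply]
    have hg0 : g 0 = V 0 := by simp [hgdef]
    have hgt : g t ≤ g 0 := hant Set.self_mem_Ici (Set.mem_Ici.mpr ht) ht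
    have hVt : V t ≤ V 0 * Real.exp (-(c * t)) := by
      have h1 : V t * Real.exp (c * t) ≤ V 0 := by rw [← hg0]; exact hgt
      have h2 := mul_le_mul_of_nonneg_right h1 (Real.exp_nonneg (-(c * t)))
      rw [mul_assoc, ← Real.exp_add] at h2
      simpa using h2
    have hV0 : V 0 ≤ lM * ‖x₀‖^2 := by
      have := keyU x₀
      rw [hVdef]; simpa [hf0] using this
    have hft : lm * ‖f t‖^2 ≤ lM * ‖x₀‖^2 * Real.exp (-(c * t)) := by
      calc lm * ‖f t‖^2 ≤ V t := keyL (f t)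
        _ ≤ V 0 * Real.exp (-(c * t)) := hVt
        _ ≤ lM * ‖x₀‖^2 * Real.exp (-(c * t)) :=
            mul_le_mul_of_nonneg_right hV0 (Real.exp_nonneg _)
    -- take square roots
    have hsq : ‖f t‖^2 ≤ (K * ‖x₀‖)^2 := by
      have hK2 : (K * ‖x₀‖)^2 = lM / lm * Real.exp (-(c * t)) * ‖x₀‖^2 := by
        rw [hKdef]
        rw [mul_pow, mul_pow, Real.sq_sqrt (by positivity)]
        have : (Real.exp (-(1 / (2 * lM)) * t))^2 = Real.exp (-(c * t)) := by
          rw [sq, ← Real.exp_add]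
          congr 1
          rw [hcdef]
          field_simp
          ring
        rw [this]
      rw [hK2]
      rw [div_mul_eq_mul_div, div_mul_eq_mul_div, le_div_iff₀ hlm]
      calc ‖f t‖^2 * lm = lm * ‖f t‖^2 := by ring
        _ ≤ lM * ‖x₀‖^2 * Real.exp (-(c * t)) := hft
        _ = lM * Real.exp (-(c * t)) * ‖x₀‖^2 := by ring
    calc ‖f t‖ = Real.sqrt (‖f t‖^2) := (Real.sqrt_sq (norm_nonneg _)).symm
      _ ≤ Real.sqrt ((K * ‖x₀‖)^2) := Real.sqrt_le_sqrt hsq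
      _ = K * ‖x₀‖ := Real.sqrt_sq (mul_nonneg hKnonneg (norm_nonneg _))
  -- conclude
  have hop : spec (NormedSpace.exp (t • A₀)) ≤ K := by
    have h1 : spec (NormedSpace.exp (t • A₀)) = ‖NormedSpace.exp (t • Ac)‖ := by
      rw [spec, ← hTcoe, hmapexp]
    rw [h1]
    exact ContinuousLinearMap.opNorm_le_bound _ hKnonneg main
  refine hop.trans ?_
  rw [hKdef]
  apply mul_le_mul_of_nonneg_right _ (Real.exp_nonneg _)
  apply Real.sqrt_le_sqrt
  gcongr
  exact le_mul_of_one_le_left hlM.le (by exact_mod_cast hn)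
end
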